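/- Let L be an a×b complex matrix, let K₁ := [[0, L],[0, 0]] and K₂ := [[0, 0],[−Lᴴ, 0]] be the corresponding (a+b)×(a+b) block matrices, let K := K₁ + K₂, and for τ ≥ 0 let Ψ_τ := (I + (τ/2)K₁)(I + τK₂)(I + (τ/2)K₁). If τ‖L‖ ≤ 1, then ‖exp(τK) − Ψ_τ‖ ≤ (1/2) τ³ ‖L‖³. -/

import Mathlib

open Matrix
open scoped Matrix.Norms.L2Operator

/-- Norm bound for an anti-diagonal block matrix. -/
lemma l2_opNorm_fromBlocks_antidiag {m n : Type*} [Fintype m] [Fintype n]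
    [DecidableEq m] [DecidableEq n] (B : Matrix m n ℂ) (C : Matrix n m ℂ) :
    ‖Matrix.fromBlocks 0 B C 0‖ ≤ max ‖B‖ ‖C‖ := by
  rw [Matrix.l2_opNorm_def]
  refine ContinuousLinearMap.opNorm_le_bound _
    (le_max_of_le_left (norm_nonneg B)) fun x => ?_
  set c := max ‖B‖ ‖C‖ with hc
  have hcB : ‖B‖ ≤ c := le_max_left _ _
  have hcC : ‖C‖ ≤ c := le_max_right _ _
  have hc0 : 0 ≤ c := le_trans (norm_nonneg B) hcB
  set y : (m ⊕ n) → ℂ := WithLp.equiv 2 _ x with hy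
  set x₁ : EuclideanSpace ℂ m := (WithLp.equiv 2 (m → ℂ)).symm (y ∘ Sum.inl) with hx1
  set x₂ : EuclideanSpace ℂ n := (WithLp.equiv 2 (n → ℂ)).symm (y ∘ Sum.inr) with hx2
  set u : EuclideanSpace ℂ m := (WithLp.equiv 2 (m → ℂ)).symm (B *ᵥ (y ∘ Sum.inr)) with hu
  set v : EuclideanSpace ℂ n := (WithLp.equiv 2 (n → ℂ)).symm (C *ᵥ (y ∘ Sum.inl)) with hv
  have hB : ‖u‖ ≤ ‖B‖ * ‖x₂‖ := Matrix.l2_opNorm_mulVec B x₂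
  have hC : ‖v‖ ≤ ‖C‖ * ‖x₁‖ := Matrix.l2_opNorm_mulVec C x₁
  have happ : (Matrix.toEuclideanLin (Matrix.fromBlocks 0 B C 0)).toContinuousLinearMap x
      = (WithLp.equiv 2 ((m ⊕ n) → ℂ)).symm (Matrix.fromBlocks 0 B C 0 *ᵥ y) := rfl
  have hmv : Matrix.fromBlocks 0 B C 0 *ᵥ y
      = Sum.elim (B *ᵥ (y ∘ Sum.inr)) (C *ᵥ (y ∘ Sum.inl)) := by
    rw [Matrix.fromBlocks_mulVec]
    simp
  have hsq : ‖(Matrix.toEuclideanLin (Matrix.fromBlocks 0 B C 0)).toContinuousLinearMap x‖ ^ 2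
      = ‖u‖ ^ 2 + ‖v‖ ^ 2 := by
    rw [happ, hmv]
    rw [PiLp.norm_sq_eq_of_L2, PiLp.norm_sq_eq_of_L2, PiLp.norm_sq_eq_of_L2,
      Fintype.sum_sum_type]
    simp [hu, hv, WithLp.equiv_symm_apply]
  have hxsq : ‖x‖ ^ 2 = ‖x₁‖ ^ 2 + ‖x₂‖ ^ 2 := by
    rw [PiLp.norm_sq_eq_of_L2, PiLp.norm_sq_eq_of_L2, PiLp.norm_sq_eq_of_L2,
      Fintype.sum_sum_type]
    simp [hx1, hx2, hy, WithLp.equiv_symm_apply]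
  have key : ‖(Matrix.toEuclideanLin (Matrix.fromBlocks 0 B C 0)).toContinuousLinearMap x‖ ^ 2
      ≤ (c * ‖x‖) ^ 2 := by
    rw [hsq]
    have h1 : ‖u‖ ^ 2 ≤ (c * ‖x₂‖) ^ 2 := by
      have : ‖u‖ ≤ c * ‖x₂‖ :=
        hB.trans (mul_le_mul_of_nonneg_right hcB (norm_nonneg _))
      exact pow_le_pow_left₀ (norm_nonneg _) this 2
    have h2 : ‖v‖ ^ 2 ≤ (c * ‖x₁‖) ^ 2 := by
      have : ‖v‖ ≤ c * ‖x₁‖ :=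
        hC.trans (mul_le_mul_of_nonneg_right hcC (norm_nonneg _))
      exact pow_le_pow_left₀ (norm_nonneg _) this 2
    calc ‖u‖ ^ 2 + ‖v‖ ^ 2 ≤ (c * ‖x₂‖) ^ 2 + (c * ‖x₁‖) ^ 2 := add_le_add h1 h2
      _ = c ^ 2 * (‖x₁‖ ^ 2 + ‖x₂‖ ^ 2) := by ring
      _ = (c * ‖x‖) ^ 2 := by rw [← hxsq]; ring
  rw [LinearEquiv.trans_apply]
  calc ‖(Matrix.toEuclideanLin (Matrix.fromBlocks 0 B C 0)).toContinuousLinearMap x‖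
      = Real.sqrt (‖(Matrix.toEuclideanLin (Matrix.fromBlocks 0 B C 0)).toContinuousLinearMap x‖ ^ 2) :=
        (Real.sqrt_sq (norm_nonneg _)).symm
    _ ≤ Real.sqrt ((c * ‖x‖) ^ 2) := Real.sqrt_le_sqrt key
    _ = c * ‖x‖ := Real.sqrt_sq (by positivity)

/-- Algebraic expansion of the leapfrog product when `A² = B² = 0`. -/
lemma leapfrog_expand {N : Type*} [Fintype N] [DecidableEq N]
    (A B : Matrix N N ℂ) (hA : A * A = 0) (hB : B * B = 0) :
    (1 + (2⁻¹ : ℂ) • A) * (1 + B) * (1 + (2⁻¹ : ℂ) • A)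
      = 1 + (A + B) + (2⁻¹ : ℂ) • ((A + B) * (A + B)) + (4⁻¹ : ℂ) • (A * B * A) := by
  simp only [mul_add, add_mul, one_mul, mul_one, smul_mul_assoc, mul_smul_comm, smul_smul,
    hA, hB, smul_zero, add_zero, zero_add]
  module

/-- `6 * 4 ^ i ≤ (i + 3)!`. -/
lemma six_mul_four_pow_le_factorial (i : ℕ) : 6 * 4 ^ i ≤ (i + 3).factorial := by
  induction i with
  | zero => simp [Nat.factorial]
  | succ k ih =>
      have h4 : 4 ≤ k + 4 := by omega
      calc 6 * 4 ^ (k + 1) = 4 * (6 * 4 ^ k) := by ring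
        _ ≤ 4 * (k + 3).factorial := Nat.mul_le_mul_left 4 ih
        _ ≤ (k + 3 + 1) * (k + 3).factorial := Nat.mul_le_mul_right _ (by omega)
        _ = (k + 1 + 3).factorial := (Nat.factorial_succ (k + 3)).symm

/-- One step of the partitioned leapfrog (Störmer–Verlet / Strang splitting) integrator
for `z' = K z` with `K = [[0, L], [−Lᴴ, 0]]`, where `K₁ = [[0, L], [0, 0]]` and
`K₂ = [[0, 0], [−Lᴴ, 0]]`:  `Ψ_τ = (I + (τ/2)K₁)(I + τK₂)(I + (τ/2)K₁)`. -/
noncomputable def leapfrogStep {a b : ℕ} (L : Matrix (Fin a) (Fin b) ℂ) (τ : ℝ) :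
    Matrix (Fin a ⊕ Fin b) (Fin a ⊕ Fin b) ℂ :=
  (1 + ((τ : ℂ) / 2) • Matrix.fromBlocks 0 L 0 0) *
    (1 + (τ : ℂ) • Matrix.fromBlocks 0 0 (-Lᴴ) 0) *
    (1 + ((τ : ℂ) / 2) • Matrix.fromBlocks 0 L 0 0)

/-- **One-step local error of the leapfrog integrator.** If `τ ≥ 0` and `τ ‖L‖ ≤ 1`, then
`‖exp(τ K) − Ψ_τ‖ ≤ (1/2) τ³ ‖L‖³`, where `K = [[0, L], [−Lᴴ, 0]] = K₁ + K₂`. -/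
theorem leapfrogStep_local_error {a b : ℕ} (L : Matrix (Fin a) (Fin b) ℂ)
    (τ : ℝ) (hτ : 0 ≤ τ) (hτL : τ * ‖L‖ ≤ 1) :
    ‖NormedSpace.exp ((τ : ℂ) • (Matrix.fromBlocks 0 L 0 0 + Matrix.fromBlocks 0 0 (-Lᴴ) 0))
        - leapfrogStep L τ‖ ≤ 1 / 2 * τ ^ 3 * ‖L‖ ^ 3 := by
  classical
  set K1 : Matrix (Fin a ⊕ Fin b) (Fin a ⊕ Fin b) ℂ := Matrix.fromBlocks 0 L 0 0 with hK1def
  set K2 : Matrix (Fin a ⊕ Fin b) (Fin a ⊕ Fin b) ℂ := Matrix.fromBlocks 0 0 (-Lᴴ) 0 with hK2def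
  set A := (τ : ℂ) • K1 with hAdef
  set B := (τ : ℂ) • K2 with hBdef
  set M := (τ : ℂ) • (K1 + K2) with hMdef
  have hMAB : M = A + B := by rw [hMdef, smul_add]
  have hK1sq : K1 * K1 = 0 := by rw [hK1def]; simp [Matrix.fromBlocks_multiply]
  have hK2sq : K2 * K2 = 0 := by rw [hK2def]; simp [Matrix.fromBlocks_multiply]
  have hAA : A * A = 0 := by
    rw [hAdef, smul_mul_assoc, mul_smul_comm, hK1sq, smul_zero, smul_zero]
  have hBB : B * B = 0 := by
    rw [hBdef, smul_mul_assoc, mul_smul_comm, hK2sq, smul_zero, smul_zero]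
  -- norm bounds on the blocks
  have hK1n : ‖K1‖ ≤ ‖L‖ := by
    refine le_trans (l2_opNorm_fromBlocks_antidiag L (0 : Matrix (Fin b) (Fin a) ℂ)) ?_
    rw [norm_zero]
    exact max_le le_rfl (norm_nonneg L)
  have hK2n : ‖K2‖ ≤ ‖L‖ := by
    refine le_trans (l2_opNorm_fromBlocks_antidiag (0 : Matrix (Fin a) (Fin b) ℂ) (-Lᴴ)) ?_
    rw [norm_zero, norm_neg, Matrix.l2_opNorm_conjTranspose]
    exact max_le (norm_nonneg L) le_rfl
  have hKn : ‖K1 + K2‖ ≤ ‖L‖ := by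
    have hsum : K1 + K2 = Matrix.fromBlocks 0 L (-Lᴴ) 0 := by
      rw [hK1def, hK2def, Matrix.fromBlocks_add]
      simp
    rw [hsum]
    refine le_trans (l2_opNorm_fromBlocks_antidiag L (-Lᴴ)) ?_
    rw [norm_neg, Matrix.l2_opNorm_conjTranspose]
    exact max_le le_rfl le_rfl
  have hτn : ‖(τ : ℂ)‖ = τ := by
    rw [Complex.norm_real, Real.norm_eq_abs, abs_of_nonneg hτ]
  set x := τ * ‖L‖ with hxdef
  have hx0 : 0 ≤ x := mul_nonneg hτ (norm_nonneg L)
  have hAx : ‖A‖ ≤ x := by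
    rw [hAdef, norm_smul, hτn]; exact mul_le_mul_of_nonneg_left hK1n hτ
  have hBx : ‖B‖ ≤ x := by
    rw [hBdef, norm_smul, hτn]; exact mul_le_mul_of_nonneg_left hK2n hτ
  have hMx : ‖M‖ ≤ x := by
    rw [hMdef, norm_smul, hτn]; exact mul_le_mul_of_nonneg_left hKn hτ
  -- leapfrog expansion
  have hhalf : ((τ : ℂ) / 2) • K1 = (2⁻¹ : ℂ) • A := by
    rw [hAdef, smul_smul]; congr 1; ring
  have hΨ : leapfrogStep L τ = 1 + M + (2⁻¹ : ℂ) • (M * M) + (4⁻¹ : ℂ) • (A * B * A) := by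
    simp only [leapfrogStep, ← hK1def, ← hK2def, ← hBdef, hhalf]
    rw [hMAB]
    exact leapfrog_expand A B hAA hBB
  -- exponential series split
  have hsum := NormedSpace.expSeries_summable' (𝕂 := ℂ) M
  have hsplit := Summable.sum_add_tsum_nat_add 3 hsum
  have hexp : NormedSpace.exp M
      = (∑ i ∈ Finset.range 3, ((i.factorial : ℂ))⁻¹ • M ^ i)
        + ∑' i : ℕ, (((i + 3).factorial : ℂ))⁻¹ • M ^ (i + 3) := by
    rw [NormedSpace.exp_eq_tsum ℂ]
    exact hsplit.symm
  have hS3 : (∑ i ∈ Finset.range 3, ((i.factorial : ℂ))⁻¹ • M ^ i)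
      = 1 + M + (2⁻¹ : ℂ) • (M * M) := by
    rw [Finset.sum_range_succ, Finset.sum_range_succ, Finset.sum_range_one]
    norm_num [Nat.factorial, pow_succ]
  set R := ∑' i : ℕ, (((i + 3).factorial : ℂ))⁻¹ • M ^ (i + 3) with hRdef
  have hdiff : NormedSpace.exp M - leapfrogStep L τ = R - (4⁻¹ : ℂ) • (A * B * A) := by
    rw [hexp, hS3, hΨ]; abel
  -- bound the remainder
  have hx1 : x ≤ 1 := hτL
  have hterm : ∀ i : ℕ, ‖(((i + 3).factorial : ℂ))⁻¹ • M ^ (i + 3)‖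
      ≤ (6⁻¹ * x ^ 3) * (4⁻¹ : ℝ) ^ i := by
    intro i
    rw [norm_smul, norm_inv]
    have h1 : ‖(((i + 3).factorial : ℕ) : ℂ)‖ = ((i + 3).factorial : ℝ) := by
      rw [Complex.norm_natCast]
    have h2 : ‖M ^ (i + 3)‖ ≤ x ^ 3 := by
      calc ‖M ^ (i + 3)‖ ≤ ‖M‖ ^ (i + 3) := norm_pow_le' M (by omega)
        _ ≤ x ^ (i + 3) := pow_le_pow_left₀ (norm_nonneg M) hMx _
        _ ≤ x ^ 3 := pow_le_pow_of_le_one hx0 hx1 (by omega)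
    have h3 : (((i + 3).factorial : ℝ))⁻¹ ≤ 6⁻¹ * (4⁻¹ : ℝ) ^ i := by
      have hle : (6 * 4 ^ i : ℝ) ≤ ((i + 3).factorial : ℝ) := by
        exact_mod_cast six_mul_four_pow_le_factorial i
      calc (((i + 3).factorial : ℝ))⁻¹ ≤ (6 * 4 ^ i : ℝ)⁻¹ :=
            inv_anti₀ (by positivity) hle
        _ = 6⁻¹ * (4⁻¹ : ℝ) ^ i := by rw [mul_inv, inv_pow]
    rw [h1]
    calc ((i + 3).factorial : ℝ)⁻¹ * ‖M ^ (i + 3)‖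
        ≤ (6⁻¹ * (4⁻¹ : ℝ) ^ i) * (x ^ 3) :=
          mul_le_mul h3 h2 (norm_nonneg _) (by positivity)
      _ = (6⁻¹ * x ^ 3) * (4⁻¹ : ℝ) ^ i := by ring
  have hgsum : Summable (fun i : ℕ => (6⁻¹ * x ^ 3) * (4⁻¹ : ℝ) ^ i) :=
    (summable_geometric_of_lt_one (by norm_num) (by norm_num)).mul_left _
  have hnsum : Summable (fun i : ℕ => ‖(((i + 3).factorial : ℂ))⁻¹ • M ^ (i + 3)‖) :=
    Summable.of_nonneg_of_le (fun i => norm_nonneg _) hterm hgsum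
  have hR : ‖R‖ ≤ 2 / 9 * x ^ 3 := by
    calc ‖R‖ ≤ ∑' i : ℕ, ‖(((i + 3).factorial : ℂ))⁻¹ • M ^ (i + 3)‖ :=
          norm_tsum_le_tsum_norm hnsum
      _ ≤ ∑' i : ℕ, (6⁻¹ * x ^ 3) * (4⁻¹ : ℝ) ^ i := Summable.tsum_le_tsum hterm hnsum hgsum
      _ = (6⁻¹ * x ^ 3) * (1 - 4⁻¹)⁻¹ := by
          rw [tsum_mul_left, tsum_geometric_of_lt_one (by norm_num) (by norm_num)]
      _ = 2 / 9 * x ^ 3 := by norm_num; ring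
  have hABA : ‖(4⁻¹ : ℂ) • (A * B * A)‖ ≤ 4⁻¹ * x ^ 3 := by
    rw [norm_smul]
    have h4 : ‖(4⁻¹ : ℂ)‖ = (4⁻¹ : ℝ) := by norm_num
    have h5 : ‖A * B * A‖ ≤ x ^ 3 := by
      calc ‖A * B * A‖ ≤ ‖A * B‖ * ‖A‖ := norm_mul_le _ _
        _ ≤ (‖A‖ * ‖B‖) * ‖A‖ :=
            mul_le_mul_of_nonneg_right (norm_mul_le _ _) (norm_nonneg _)
        _ ≤ (x * x) * x := by
            refine mul_le_mul ?_ hAx (norm_nonneg _) (by positivity)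
            exact mul_le_mul hAx hBx (norm_nonneg _) hx0
        _ = x ^ 3 := by ring
    rw [h4]
    exact mul_le_mul_of_nonneg_left h5 (by norm_num)
  calc ‖NormedSpace.exp M - leapfrogStep L τ‖
      = ‖R - (4⁻¹ : ℂ) • (A * B * A)‖ := by rw [hdiff]
    _ ≤ ‖R‖ + ‖(4⁻¹ : ℂ) • (A * B * A)‖ := norm_sub_le _ _
    _ ≤ 2 / 9 * x ^ 3 + 4⁻¹ * x ^ 3 := add_le_add hR hABA
    _ ≤ 1 / 2 * x ^ 3 := by nlinarith [pow_nonneg hx0 3]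
    _ = 1 / 2 * τ ^ 3 * ‖L‖ ^ 3 := by rw [hxdef, mul_pow]; ring
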